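/- Let b_q(n) denote the number of direct sum decompositions of F_q^n into nonzero subspaces (the q-Bell number, with b_q(0) = 1). Then the exponential generating function identity holds: Σ_{n≥0} b_q(n) x^n / γ_n = exp(Σ_{r≥1} x^r / γ_r) as formal power series over ℚ. -/

import Mathlib

/-- The order of `GL_m(F_q)`. -/
def gma (q m : ℕ) : ℕ := ∏ i ∈ Finset.range m, (q ^ m - q ^ i)

set_option linter.unusedSectionVars false


open Module Finset

variable {F : Type} [Field F] [Fintype F]

lemma qb_two_le : 2 ≤ Fintype.card F := Fintype.one_lt_card

lemma gma_pos {q : ℕ} (hq : 2 ≤ q) (m : ℕ) : 0 < gma q m := by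
  apply Finset.prod_pos
  intro i hi
  have : q ^ i < q ^ m := Nat.pow_lt_pow_right (by omega) (Finset.mem_range.mp hi)
  omega

/-- The number of bases of a finite-dimensional space over a finite field. -/
lemma card_basis {V : Type} [AddCommGroup V] [Module F V] [FiniteDimensional F V]
    {ι : Type} [Fintype ι] (h : Fintype.card ι = finrank F V) :
    Nat.card (Basis ι F V) = gma (Fintype.card F) (finrank F V) := by
  haveI : Finite V := Module.finite_of_finite F
  rcases Nat.eq_zero_or_pos (finrank F V) with h0 | hpos
  · haveI : IsEmpty ι := Fintype.card_eq_zero_iff.mp (by omega)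
    haveI : Subsingleton V := by
      rw [finrank_zero_iff_forall_zero] at h0
      exact ⟨fun a b => by rw [h0 a, h0 b]⟩
    haveI : Unique (Basis ι F V) := ⟨⟨Basis.empty V⟩, fun b => Basis.eq_of_apply_eq (fun i => isEmptyElim i)⟩
    simp [h0, gma]
  · haveI : Nonempty ι := Fintype.card_pos_iff.mp (by omega)
    have e : Basis ι F V ≃ { s : ι → V // LinearIndependent F s } :=
      { toFun := fun b => ⟨b, b.linearIndependent⟩
        invFun := fun s => basisOfLinearIndependentOfCardEqFinrank s.2 h
        left_inv := fun b => Basis.eq_of_apply_eq (fun i =>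
          congrFun (coe_basisOfLinearIndependentOfCardEqFinrank _ _) i)
        right_inv := fun s => Subtype.ext
          (coe_basisOfLinearIndependentOfCardEqFinrank _ _) }
    have e2 : ι ≃ Fin (finrank F V) := Fintype.equivFinOfCardEq h
    have e3 : { s : ι → V // LinearIndependent F s } ≃
        { s : Fin (finrank F V) → V // LinearIndependent F s } :=
      { toFun := fun s => ⟨s.1 ∘ e2.symm, s.2.comp _ e2.symm.injective⟩
        invFun := fun s => ⟨s.1 ∘ e2, s.2.comp _ e2.injective⟩
        left_inv := fun s => Subtype.ext (by ext i; simp)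
        right_inv := fun s => Subtype.ext (by ext i; simp) }
    rw [Nat.card_congr (e.trans e3), card_linearIndependent (le_refl _), gma]
    exact Fin.prod_univ_eq_prod_range
      (fun j => Fintype.card F ^ finrank F V - Fintype.card F ^ j) _


section Internal
open scoped DirectSum

variable {F : Type} [Field F] {W : Type} [AddCommGroup W] [Module F W]
  [FiniteDimensional F W] {ι : Type} [Fintype ι] [DecidableEq ι]

instance ds_findim {A : ι → Submodule F W} : FiniteDimensional F (⨁ i, A i) :=
  Module.Finite.equiv (DirectSum.linearEquivFunOnFintype F ι fun i => A i).symm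

lemma isInternal_of_sum_finrank {A : ι → Submodule F W} (h : ⨆ i, A i = ⊤)
    (hd : ∑ i, finrank F (A i) = finrank F W) : DirectSum.IsInternal A := by
  have hsurj : Function.Surjective (DirectSum.coeLinearMap A) := by
    rw [← LinearMap.range_eq_top, DirectSum.range_coeLinearMap, h]
  have hfr : finrank F (⨁ i, A i) = finrank F W := by
    rw [Module.finrank_directSum, hd]
  exact ⟨(LinearMap.injective_iff_surjective_of_finrank_eq_finrank hfr).mpr hsurj, hsurj⟩

lemma sum_finrank_of_isInternal {A : ι → Submodule F W} (h : DirectSum.IsInternal A) :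
    ∑ i, finrank F (A i) = finrank F W := by
  have := (LinearEquiv.ofBijective (DirectSum.coeLinearMap A) h).finrank_eq
  rwa [Module.finrank_directSum] at this

end Internal


section KeyCount

variable {F : Type} [Field F] [Fintype F]

lemma submodule_finite (n : ℕ) : Finite (Submodule F (Fin n → F)) :=
  Finite.of_injective (fun p => (p : Set (Fin n → F))) SetLike.coe_injective

lemma basis_finite {V : Type} [AddCommGroup V] [Module F V] [Finite V] (ι : Type) [Finite ι] :
    Finite (Basis ι F V) :=
  Finite.of_injective (fun b => ⇑b) (fun b c h => Basis.eq_of_apply_eq (congrFun h))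

lemma card_Tl {n k : ℕ} (l : Fin k → ℕ) (hl : ∑ i, l i = n) :
    Nat.card {f : Fin k → Submodule F (Fin n → F) //
        iSupIndep f ∧ iSup f = ⊤ ∧ ∀ i, finrank F (f i) = l i} *
      ∏ i, gma (Fintype.card F) (l i) = gma (Fintype.card F) n := by
  classical
  haveI := submodule_finite (F := F) n
  set T := {f : Fin k → Submodule F (Fin n → F) //
        iSupIndep f ∧ iSup f = ⊤ ∧ ∀ i, finrank F (f i) = l i} with hT
  have hfr : finrank F (Fin n → F) = n := Module.finrank_fin_fun F
  -- the bijection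
  set Ψ : (Σ f : T, ∀ i, Basis (Fin (l i)) F (f.1 i)) →
      Basis (Σ i, Fin (l i)) F (Fin n → F) := fun p =>
    (DirectSum.isInternal_submodule_of_iSupIndep_of_iSup_eq_top
      p.1.2.1 p.1.2.2.1).collectedBasis p.2 with hΨ
  have hΨcoe : ∀ p a, (Ψ p) a = ((p.2 a.1 a.2 : Fin n → F)) := by
    intro p a
    rw [hΨ]
    rw [DirectSum.IsInternal.collectedBasis_coe]
  have span_block : ∀ (f : T) (bs : ∀ i, Basis (Fin (l i)) F (f.1 i)) (i : Fin k),
      Submodule.span F (Set.range fun j => ((bs i j : Fin n → F))) = f.1 i := by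
    intro f bs i
    have h1 : (Set.range fun j => ((bs i j : Fin n → F)))
        = (f.1 i).subtype '' Set.range (bs i) := by
      rw [← Set.range_comp]; rfl
    rw [h1, ← Submodule.map_span, (bs i).span_eq, Submodule.map_subtype_top]
  have hinj : Function.Injective Ψ := by
    rintro ⟨f, bs⟩ ⟨g, cs⟩ h
    have hcoe : ∀ a : Σ i, Fin (l i), ((bs a.1 a.2 : Fin n → F)) = cs a.1 a.2 := by
      intro a
      have h2 := DFunLike.congr_fun h a
      rwa [hΨcoe ⟨f, bs⟩ a, hΨcoe ⟨g, cs⟩ a] at h2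
    have hfg : f = g := by
      refine Subtype.ext (funext fun i => ?_)
      rw [← span_block f bs i, ← span_block g cs i,
        funext (fun j => hcoe ⟨i, j⟩)]
    subst hfg
    exact congrArg (Sigma.mk f)
      (funext fun i => Basis.eq_of_apply_eq fun j => Subtype.ext (hcoe ⟨i, j⟩))
  have hsurj : Function.Surjective Ψ := by
    intro b
    set v : ∀ i : Fin k, Fin (l i) → (Fin n → F) := fun i j => b ⟨i, j⟩ with hv
    have hli : ∀ i, LinearIndependent F (v i) := fun i =>
      b.linearIndependent.comp (Sigma.mk i) sigma_mk_injective
    set f : Fin k → Submodule F (Fin n → F) := fun i => Submodule.span F (Set.range (v i))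
      with hf
    have hsup : ⨆ i, f i = ⊤ := by
      rw [hf]
      simp only [← Submodule.span_iUnion]
      rw [← Set.range_sigma_eq_iUnion_range, b.span_eq]
    have hdim : ∀ i, finrank F (f i) = l i := fun i => by
      rw [hf]
      rw [finrank_span_eq_card (hli i), Fintype.card_fin]
    have hint : DirectSum.IsInternal f :=
      isInternal_of_sum_finrank hsup (by rw [hfr]; simp only [hdim]; exact hl)
    refine ⟨⟨⟨f, hint.submodule_iSupIndep, hsup, hdim⟩, fun i => Basis.span (hli i)⟩, ?_⟩
    refine Basis.eq_of_apply_eq fun a => ?_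
    rw [hΨcoe]
    exact congrArg Subtype.val (Basis.span_apply (hli a.1) a.2)
  -- cardinalities
  haveI : Finite T := Subtype.finite
  haveI : ∀ (f : T) (i : Fin k), Finite (Basis (Fin (l i)) F (f.1 i)) := by
    intro f i
    haveI : Finite (f.1 i) := Subtype.finite
    exact basis_finite _
  have hcards := Nat.card_congr (Equiv.ofBijective Ψ ⟨hinj, hsurj⟩)
  have hrhs : Nat.card (Basis (Σ i, Fin (l i)) F (Fin n → F))
      = gma (Fintype.card F) n := by
    have hcard : Fintype.card (Σ i, Fin (l i)) = finrank F (Fin n → F) := by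
      rw [hfr, Fintype.card_sigma]
      simp only [Fintype.card_fin]
      exact hl
    rw [card_basis hcard, hfr]
  have hlhs : Nat.card (Σ f : T, ∀ i, Basis (Fin (l i)) F (f.1 i))
      = Nat.card T * ∏ i, gma (Fintype.card F) (l i) := by
    haveI : Fintype T := Fintype.ofFinite T
    haveI : ∀ (f : T) (i : Fin k), Fintype (Basis (Fin (l i)) F (f.1 i)) :=
      fun f i => Fintype.ofFinite _
    rw [Nat.card_eq_fintype_card, Fintype.card_sigma]
    have hper : ∀ f : T, Fintype.card (∀ i, Basis (Fin (l i)) F (f.1 i))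
        = ∏ i, gma (Fintype.card F) (l i) := by
      intro f
      rw [Fintype.card_pi]
      refine Finset.prod_congr rfl fun i _ => ?_
      have hcb := card_basis (F := F) (V := f.1 i) (ι := Fin (l i))
        (by rw [Fintype.card_fin, f.2.2.2 i])
      rw [Nat.card_eq_fintype_card] at hcb
      rw [hcb, f.2.2.2 i]
    simp only [hper]
    rw [Finset.sum_const, Finset.card_univ, smul_eq_mul, Nat.card_eq_fintype_card]
  rw [← hlhs, hcards, hrhs]

end KeyCount


section Fiber

lemma card_fiber_sum {S A : Type} [Finite S] [DecidableEq A] (φ : S → A) (t : Finset A)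
    (h : ∀ s, φ s ∈ t) : Nat.card S = ∑ a ∈ t, Nat.card {s : S // φ s = a} := by
  classical
  haveI := Fintype.ofFinite S
  rw [Nat.card_eq_fintype_card, ← Finset.card_univ,
    Finset.card_eq_sum_card_fiberwise (fun s _ => h s)]
  refine Finset.sum_congr rfl fun a _ => ?_
  rw [Nat.card_eq_fintype_card, Fintype.card_subtype]

end Fiber

section TkCount

variable {F : Type} [Field F] [Fintype F]

lemma card_Tk (n k : ℕ) :
    (Nat.card {f : Fin k → Submodule F (Fin n → F) //
        (∀ i, f i ≠ ⊥) ∧ iSupIndep f ∧ iSup f = ⊤} : ℚ) =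
      ∑ l ∈ Finset.finsuppAntidiag (Finset.range k) n,
        (gma (Fintype.card F) n : ℚ) *
          ∏ i ∈ Finset.range k, (if l i = 0 then 0 else ((gma (Fintype.card F) (l i) : ℚ))⁻¹) := by
  classical
  haveI := submodule_finite (F := F) n
  have hq : 2 ≤ Fintype.card F := qb_two_le
  have hfr : finrank F (Fin n → F) = n := Module.finrank_fin_fun F
  set T := {f : Fin k → Submodule F (Fin n → F) //
      (∀ i, f i ≠ ⊥) ∧ iSupIndep f ∧ iSup f = ⊤} with hT
  haveI : Finite T := Subtype.finite
  -- the dimension-vector map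
  set g : (Fin k → Submodule F (Fin n → F)) → ℕ → ℕ :=
    fun f j => if h : j < k then finrank F (f ⟨j, h⟩) else 0 with hg
  set φ : T → (ℕ →₀ ℕ) := fun s => Finsupp.onFinset (Finset.range k) (g s.1)
    (fun a ha => by
      rw [Finset.mem_range]
      by_contra hc
      exact ha (dif_neg hc)) with hφ
  have hφapply : ∀ (s : T) (j : ℕ), φ s j = g s.1 j := fun s j => rfl
  have hsum : ∀ s : T, ∑ i : Fin k, finrank F (s.1 i) = n := by
    intro s
    have h2 := sum_finrank_of_isInternal
      (DirectSum.isInternal_submodule_of_iSupIndep_of_iSup_eq_top s.2.2.1 s.2.2.2)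
    rwa [hfr] at h2
  have hmem : ∀ s : T, φ s ∈ Finset.finsuppAntidiag (Finset.range k) n := by
    intro s
    rw [Finset.mem_finsuppAntidiag]
    constructor
    · rw [← Fin.sum_univ_eq_sum_range (fun j => φ s j) k]
      rw [← hsum s]
      refine Finset.sum_congr rfl fun i _ => ?_
      rw [hφapply, hg]
      simp [i.isLt]
    · exact Finsupp.support_onFinset_subset
  rw [card_fiber_sum φ _ hmem]
  push_cast
  refine Finset.sum_congr rfl fun l hl => ?_
  rw [Finset.mem_finsuppAntidiag] at hl
  by_cases hpos : ∀ j ∈ Finset.range k, l j ≠ 0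
  · -- positive dimension vector
    set l' : Fin k → ℕ := fun i => l i.val with hl'
    have hsuml' : ∑ i : Fin k, l' i = n := by
      rw [Fin.sum_univ_eq_sum_range (fun j => l j) k]
      exact hl.1
    have e : {s : T // φ s = l} ≃ {f : Fin k → Submodule F (Fin n → F) //
        iSupIndep f ∧ iSup f = ⊤ ∧ ∀ i, finrank F (f i) = l' i} :=
      { toFun := fun s => ⟨s.1.1, s.1.2.2.1, s.1.2.2.2, fun i => by
          have h2 : φ s.1 i.val = l i.val := by rw [s.2]
          rw [hφapply] at h2
          rw [hg] at h2
          simpa [i.isLt] using h2⟩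
        invFun := fun f => ⟨⟨f.1, fun i => by
            intro hbot
            have h0 : finrank F (f.1 i) = 0 := by rw [hbot]; exact finrank_bot F _
            rw [f.2.2.2 i] at h0
            exact hpos i.val (Finset.mem_range.mpr i.isLt) h0, f.2.1, f.2.2.1⟩, by
          apply Finsupp.ext
          intro j
          rw [hφapply, hg]
          by_cases hj : j < k
          · simp only [dif_pos hj]
            exact f.2.2.2 ⟨j, hj⟩
          · simp only [dif_neg hj]
            symm
            rw [← Finsupp.notMem_support_iff]
            intro hmem'
            exact hj (Finset.mem_range.mp (hl.2 hmem'))⟩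
        left_inv := fun s => Subtype.ext (Subtype.ext rfl)
        right_inv := fun f => Subtype.ext rfl }
    have hcount := card_Tl (F := F) l' hsuml'
    have hγpos : (0:ℚ) < ∏ i : Fin k, (gma (Fintype.card F) (l' i) : ℚ) := by
      refine Finset.prod_pos fun i _ => ?_
      exact_mod_cast gma_pos hq (l' i)
    have hcast : (Nat.card {s : T // φ s = l} : ℚ) *
        ∏ i : Fin k, (gma (Fintype.card F) (l' i) : ℚ) = (gma (Fintype.card F) n : ℚ) := by
      rw [Nat.card_congr e]
      exact_mod_cast hcount
    have : (Nat.card {s : T // φ s = l} : ℚ) = (gma (Fintype.card F) n : ℚ) *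
        (∏ i : Fin k, (gma (Fintype.card F) (l' i) : ℚ))⁻¹ := by
      rw [eq_mul_inv_iff_mul_eq₀ (ne_of_gt hγpos)]
      exact hcast
    rw [this]
    congr 1
    rw [← Finset.prod_inv_distrib]
    rw [← Fin.prod_univ_eq_prod_range (fun j => if l j = 0 then (0:ℚ) else (gma (Fintype.card F) (l j) : ℚ)⁻¹) k]
    refine Finset.prod_congr rfl fun i _ => ?_
    rw [if_neg (hpos i.val (Finset.mem_range.mpr i.isLt))]
  · -- some part has dimension zero : both sides vanish
    push_neg at hpos
    obtain ⟨j, hjk, hj0⟩ := hpos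
    have hempty : IsEmpty {s : T // φ s = l} := by
      constructor
      rintro ⟨s, hs⟩
      have h2 : φ s j = l j := by rw [hs]
      rw [hφapply] at h2
      simp only [hg] at h2
      have hjk' : j < k := Finset.mem_range.mp hjk
      rw [dif_pos hjk', hj0] at h2
      have hbot : s.1 ⟨j, hjk'⟩ = ⊥ := by
        haveI : FiniteDimensional F (s.1 ⟨j, hjk'⟩) := inferInstance
        exact Submodule.finrank_eq_zero.mp h2
      exact s.2.1 _ hbot
    rw [Nat.card_of_isEmpty]
    have hz : (∏ i ∈ Finset.range k,
        if l i = 0 then (0:ℚ) else ((gma (Fintype.card F) (l i) : ℚ))⁻¹) = 0 :=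
      Finset.prod_eq_zero hjk (if_pos hj0)
    rw [hz, mul_zero, Nat.cast_zero]

end TkCount


/-- The `q`-Bell number: the number of direct sum decompositions of `F_q^n` into
nonzero subspaces (with `b_q(0) = 1`, by the empty decomposition). -/
noncomputable def qBell (n : ℕ) (F : Type) [Field F] [Fintype F] : ℕ :=
  Nat.card {D : Finset (Submodule F (Fin n → F)) //
    (∀ V ∈ D, V ≠ ⊥) ∧
    sSupIndep (D : Set (Submodule F (Fin n → F))) ∧
    sSup (D : Set (Submodule F (Fin n → F))) = ⊤}


section Fiber2

lemma card_fiber_sum' {S B : Type} [Finite S] [Fintype B] [DecidableEq B] (ψ : S → B) :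
    Nat.card S = ∑ b : B, Nat.card {s : S // ψ s = b} := by
  classical
  haveI := Fintype.ofFinite S
  haveI : ∀ b, Fintype {s : S // ψ s = b} := fun b => Fintype.ofFinite _
  rw [Nat.card_congr (Equiv.sigmaFiberEquiv ψ).symm, Nat.card_eq_fintype_card,
    Fintype.card_sigma]
  exact Finset.sum_congr rfl fun b _ => Nat.card_eq_fintype_card.symm

end Fiber2

section BellCount

variable {F : Type} [Field F] [Fintype F]

lemma qBell_eq_sum (n : ℕ) :
    (qBell n F : ℚ) = ∑ k ∈ Finset.range (n+1), ((k.factorial : ℚ))⁻¹ *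
      (Nat.card {f : Fin k → Submodule F (Fin n → F) //
        (∀ i, f i ≠ ⊥) ∧ iSupIndep f ∧ iSup f = ⊤} : ℚ) := by
  classical
  haveI := submodule_finite (F := F) n
  have hfr : finrank F (Fin n → F) = n := Module.finrank_fin_fun F
  set Dec := {D : Finset (Submodule F (Fin n → F)) //
    (∀ V ∈ D, V ≠ ⊥) ∧
    sSupIndep (D : Set (Submodule F (Fin n → F))) ∧
    sSup (D : Set (Submodule F (Fin n → F))) = ⊤} with hDec
  haveI : Finite Dec := Subtype.finite
  haveI : Fintype Dec := Fintype.ofFinite Dec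
  -- each decomposition has at most n parts
  have hDcard : ∀ D : Dec, D.1.card ≤ n := by
    intro D
    have hind : iSupIndep (fun V : {x // x ∈ D.1} => (V : Submodule F (Fin n → F))) :=
      (sSupIndep_iff _).mp D.2.2.1
    have hle := hind.subtype_ne_bot_le_finrank
    rw [hfr] at hle
    refine le_trans (le_of_eq ?_) hle
    rw [← Fintype.card_coe D.1]
    exact (Fintype.card_congr (Equiv.subtypeUnivEquiv
      (fun (V : {x // x ∈ D.1}) => D.2.1 V.1 V.2))).symm
  -- per-decomposition fiber count
  have hfiber : ∀ (k : ℕ) (D : Dec),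
      (Nat.card {f : {f : Fin k → Submodule F (Fin n → F) //
          (∀ i, f i ≠ ⊥) ∧ iSupIndep f ∧ iSup f = ⊤} //
        Finset.image f.1 Finset.univ = D.1} : ℚ)
      = if D.1.card = k then (k.factorial : ℚ) else 0 := by
    intro k D
    by_cases hk : D.1.card = k
    · rw [if_pos hk]
      have e : {f : {f : Fin k → Submodule F (Fin n → F) //
          (∀ i, f i ≠ ⊥) ∧ iSupIndep f ∧ iSup f = ⊤} //
            Finset.image f.1 Finset.univ = D.1} ≃ (Fin k ≃ {x // x ∈ D.1}) :=
        { toFun := fun f => Equiv.ofBijective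
            (fun i => (⟨f.1.1 i, by
              have hm := Finset.mem_image_of_mem f.1.1 (Finset.mem_univ i)
              rwa [f.2] at hm⟩ : {x // x ∈ D.1}))
            (by
              rw [Fintype.bijective_iff_injective_and_card]
              constructor
              · intro i j hij
                exact f.1.2.2.1.injective f.1.2.1 (congrArg Subtype.val hij)
              · rw [Fintype.card_coe, hk, Fintype.card_fin])
          invFun := fun e => ⟨⟨fun i => (e i : Submodule F (Fin n → F)), by
            refine ⟨fun i => D.2.1 _ (e i).2, ?_, ?_⟩
            · exact ((sSupIndep_iff _).mp D.2.2.1).comp e.injective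
            · rw [Equiv.iSup_comp (g := fun V : {x // x ∈ D.1} =>
                (V : Submodule F (Fin n → F))) e]
              have h3 := D.2.2.2
              rw [sSup_eq_iSup'] at h3
              exact h3⟩, by
            ext V
            simp only [Finset.mem_image, Finset.mem_univ, true_and]
            constructor
            · rintro ⟨i, rfl⟩; exact (e i).2
            · intro hV; exact ⟨e.symm ⟨V, hV⟩, by rw [Equiv.apply_symm_apply]⟩⟩
          left_inv := fun f => Subtype.ext (Subtype.ext rfl)
          right_inv := fun e => Equiv.ext fun i => Subtype.ext rfl }
      rw [Nat.card_congr e, Nat.card_eq_fintype_card]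
      have e2 : Fin k ≃ {x // x ∈ D.1} :=
        (Fintype.equivFinOfCardEq ((Fintype.card_coe D.1).trans hk)).symm
      rw [Fintype.card_equiv e2, Fintype.card_fin]
    · rw [if_neg hk, Nat.cast_eq_zero, Nat.card_eq_zero]
      left
      constructor
      rintro ⟨f, hf⟩
      apply hk
      rw [← hf]
      rw [Finset.card_image_of_injective _ (f.2.2.1.injective f.2.1), Finset.card_univ,
        Fintype.card_fin]
  -- fiberwise count of ordered decompositions
  have hTk : ∀ k : ℕ, (Nat.card {f : Fin k → Submodule F (Fin n → F) //
        (∀ i, f i ≠ ⊥) ∧ iSupIndep f ∧ iSup f = ⊤} : ℚ)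
      = ∑ D : Dec, if D.1.card = k then (k.factorial : ℚ) else 0 := by
    intro k
    set ψ : {f : Fin k → Submodule F (Fin n → F) //
        (∀ i, f i ≠ ⊥) ∧ iSupIndep f ∧ iSup f = ⊤} → Dec := fun f =>
      ⟨Finset.image f.1 Finset.univ, by
        have hset : ((Finset.image f.1 Finset.univ : Finset _) : Set (Submodule F (Fin n → F)))
            = Set.range f.1 := by
          rw [Finset.coe_image, Finset.coe_univ, Set.image_univ]
        refine ⟨?_, ?_, ?_⟩
        · intro V hV
          obtain ⟨i, _, rfl⟩ := Finset.mem_image.mp hV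
          exact f.2.1 i
        · rw [hset]
          exact f.2.2.1.sSupIndep_range
        · rw [hset, sSup_range]
          exact f.2.2.2⟩ with hψ
    have hψimg : ∀ f, (ψ f).1 = Finset.image f.1 Finset.univ := fun f => rfl
    rw [card_fiber_sum' ψ]
    push_cast
    refine Finset.sum_congr rfl fun D _ => ?_
    rw [← hfiber k D]
    congr 1
    apply Nat.card_congr
    exact Equiv.subtypeEquivRight fun f =>
      ⟨fun h => congrArg Subtype.val h, fun h => Subtype.ext h⟩
  -- assemble
  have hqB : (qBell n F : ℚ) = ∑ D : Dec, (1 : ℚ) := by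
    have h4 : qBell n F = Fintype.card Dec := by
      rw [← Nat.card_eq_fintype_card]; rfl
    rw [h4]
    simp
  rw [hqB]
  have : ∀ k ∈ Finset.range (n+1), ((k.factorial : ℚ))⁻¹ *
      (Nat.card {f : Fin k → Submodule F (Fin n → F) //
        (∀ i, f i ≠ ⊥) ∧ iSupIndep f ∧ iSup f = ⊤} : ℚ)
      = ∑ D : Dec, if D.1.card = k then (1:ℚ) else 0 := by
    intro k _
    rw [hTk k, Finset.mul_sum]
    refine Finset.sum_congr rfl fun D _ => ?_
    by_cases h : D.1.card = k
    · rw [if_pos h, if_pos h, inv_mul_cancel₀ (by exact_mod_cast k.factorial_ne_zero)]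
    · rw [if_neg h, if_neg h, mul_zero]
  rw [Finset.sum_congr rfl this, Finset.sum_comm]
  refine Finset.sum_congr rfl fun D _ => ?_
  rw [Finset.sum_ite_eq]
  rw [if_pos (Finset.mem_range.mpr (Nat.lt_succ_of_le (hDcard D)))]

end BellCount


/-- The exponential `exp E = Σ_k E^k / k!` of a formal power series with zero constant
term (for the coefficient of `xⁿ` only `k ≤ n` contribute). -/
noncomputable def psExp (E : PowerSeries ℚ) : PowerSeries ℚ :=
  PowerSeries.mk fun n =>
    ∑ k ∈ Finset.range (n + 1), ((k.factorial : ℚ))⁻¹ * (PowerSeries.coeff (R := ℚ) n) (E ^ k)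

/-- The exponential generating function identity
`Σ_{n≥0} b_q(n) xⁿ/γ_n = exp (Σ_{r≥1} x^r/γ_r)` for the `q`-Bell numbers. -/
theorem qBell_egf (q : ℕ)
    (F : Type) [Field F] [Fintype F] (hF : Fintype.card F = q) :
    PowerSeries.mk (fun n => (qBell n F : ℚ) / gma q n) =
      psExp (PowerSeries.mk fun r => if r = 0 then 0 else 1 / (gma q r : ℚ)) := by
  subst hF
  ext n
  rw [PowerSeries.coeff_mk, psExp, PowerSeries.coeff_mk]
  have hq : 2 ≤ Fintype.card F := qb_two_le
  have hγ : ((gma (Fintype.card F) n : ℚ)) ≠ 0 := by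
    exact_mod_cast (gma_pos hq n).ne'
  rw [div_eq_iff hγ, qBell_eq_sum n, Finset.sum_mul]
  refine Finset.sum_congr rfl fun k _ => ?_
  rw [card_Tk n k, PowerSeries.coeff_pow, mul_assoc]
  congr 1
  rw [Finset.sum_mul]
  refine Finset.sum_congr rfl fun l _ => ?_
  rw [mul_comm]
  congr 1
  refine Finset.prod_congr rfl fun i _ => ?_
  rw [PowerSeries.coeff_mk, one_div]
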